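/- Let T : ℝ₊^N → ℝ₊₊^N be a positive concave mapping whose lower bounding matrix M satisfies ρ(M) < 1. Then for every x ∈ ℝ₊^N, the vector (I − M)⁻¹·(T(x) − M·x) is strictly positive in every component; in particular T(x) − M·x ≥ T(0) > 0 componentwise. -/

import Mathlib

open Matrix Filter Topology

noncomputable section

/-- `g` is a supergradient of `f` at `x`: the supergradient inequality holds for all
points `y` in the nonnegative orthant. -/
def IsSupergrad {N : ℕ} (f : (Fin N → ℝ) → ℝ) (x g : Fin N → ℝ) : Prop :=
  ∀ y : Fin N → ℝ, 0 ≤ y → f y ≤ f x + ∑ i, g i * (y i - x i)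

/-- `M` is the lower bounding matrix of the positive concave mapping with components `f i`:
`M i k` is the infimum of the `k`-th components of all supergradients of `f i` at points of
the nonnegative orthant. -/
def IsLBM {N : ℕ} (f : Fin N → (Fin N → ℝ) → ℝ) (M : Matrix (Fin N) (Fin N) ℝ) : Prop :=
  ∀ i k, M i k =
    sInf {t : ℝ | ∃ x : Fin N → ℝ, 0 ≤ x ∧ ∃ g : Fin N → ℝ, IsSupergrad (f i) x g ∧ g k = t}

/-- The spectral radius of a real matrix: the supremum of the moduli of its complex
eigenvalues. -/
def specRad {N : ℕ} (M : Matrix (Fin N) (Fin N) ℝ) : ENNReal :=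
  spectralRadius ℂ (M.map (algebraMap ℝ ℂ))

/-! ### Auxiliary lemmas -/

/-- Supergradients of positive functions on the orthant have nonnegative components. -/
lemma supergrad_nonneg {N : ℕ} {f : (Fin N → ℝ) → ℝ}
    (hpos : ∀ y : Fin N → ℝ, 0 ≤ y → 0 < f y)
    {x g : Fin N → ℝ} (hx : 0 ≤ x) (hg : IsSupergrad f x g) (k : Fin N) : 0 ≤ g k := by
  by_contra hneg
  push_neg at hneg
  have hgk : 0 < -g k := by linarith
  have hfx : 0 < f x := hpos x hx
  set t : ℝ := (f x + 1) / (-g k) with ht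
  have htpos : 0 < t := by positivity
  set y : Fin N → ℝ := x + t • (Pi.single k 1 : Fin N → ℝ) with hy
  have hy0 : 0 ≤ y := by
    intro j
    have hxj : (0:ℝ) ≤ x j := hx j
    by_cases hjk : j = k
    · subst hjk
      simp only [hy, Pi.add_apply, Pi.smul_apply, Pi.single_eq_same, smul_eq_mul, mul_one,
        Pi.zero_apply]
      linarith
    · simp only [hy, Pi.add_apply, Pi.smul_apply, Pi.single_eq_of_ne hjk, smul_eq_mul, mul_zero,
        add_zero, Pi.zero_apply]
      exact hxj
  have hsum : ∑ j, g j * (y j - x j) = g k * t := by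
    rw [Finset.sum_eq_single k]
    · simp [hy]
    · intro j _ hjk
      simp [hy, Pi.single_eq_of_ne hjk]
    · intro h; exact absurd (Finset.mem_univ k) h
  have hgt : g k * t = -(f x + 1) := by
    rw [ht]
    rw [mul_div_assoc', div_eq_iff hgk.ne']
    ring
  have := hg y hy0
  rw [hsum, hgt] at this
  have := hpos y hy0
  linarith

/-- Existence of a supergradient at a strictly positive point. -/
lemma exists_supergrad {N : ℕ} {f : (Fin N → ℝ) → ℝ}
    (hconc : ConcaveOn ℝ {x : Fin N → ℝ | 0 ≤ x} f)
    {x : Fin N → ℝ} (hx : ∀ k, 0 < x k) : ∃ g : Fin N → ℝ, IsSupergrad f x g := by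
  classical
  set S : Set (Fin N → ℝ) := {x : Fin N → ℝ | 0 ≤ x} with hS
  have hmemS : ∀ {z : Fin N → ℝ}, (∀ k, 0 < z k) → z ∈ S := by
    intro z hz j; exact (hz j).le
  have hxS : x ∈ S := hmemS hx
  -- the open convex set: strict hypograph over the open orthant
  set U : Set ((Fin N → ℝ) × ℝ) := {p | (∀ k, 0 < p.1 k) ∧ p.2 < f p.1} with hU
  set P : Set (Fin N → ℝ) := {z | ∀ k, 0 < z k} with hP
  have hPopen : IsOpen P := by
    have : P = ⋂ k, (fun z : Fin N → ℝ => z k) ⁻¹' Set.Ioi 0 := by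
      ext z; simp [hP]
    rw [this]
    exact isOpen_iInter_of_finite fun k => isOpen_Ioi.preimage (continuous_apply k)
  have hPS : P ⊆ S := fun z hz => hmemS hz
  have hPconv : Convex ℝ P := by
    intro p hp q hq a b ha hb hab k
    rcases eq_or_lt_of_le ha with rfl | ha'
    · simp only [zero_add] at hab; subst hab
      simpa using hq k
    rcases eq_or_lt_of_le hb with rfl | hb'
    · simp only [add_zero] at hab; subst hab
      simpa using hp k
    have : 0 < a * p k + b * q k := add_pos (mul_pos ha' (hp k)) (mul_pos hb' (hq k))
    simpa using this
  have hfc : ContinuousOn f P :=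
    ((hconc.subset hPS hPconv).continuousOn hPopen)
  have hUopen : IsOpen U := by
    have heq : U = (P ×ˢ (Set.univ : Set ℝ)) ∩ (fun p : (Fin N → ℝ) × ℝ => f p.1 - p.2) ⁻¹'
        Set.Ioi 0 := by
      ext p
      simp only [hU, hP, Set.mem_inter_iff, Set.mem_prod, Set.mem_setOf_eq, Set.mem_univ,
        and_true, Set.mem_preimage, Set.mem_Ioi, sub_pos]
    rw [heq]
    refine ContinuousOn.isOpen_inter_preimage ?_ (hPopen.prod isOpen_univ) isOpen_Ioi
    exact (hfc.comp continuous_fst.continuousOn fun p hp => hp.1).sub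
      continuous_snd.continuousOn
  have hUconv : Convex ℝ U := by
    rintro ⟨p, s⟩ ⟨hp, hps⟩ ⟨q, t⟩ ⟨hq, hqt⟩ a b ha hb hab
    rcases eq_or_lt_of_le ha with rfl | ha'
    · simp only [zero_add] at hab; subst hab; simpa using ⟨hq, hqt⟩
    rcases eq_or_lt_of_le hb with rfl | hb'
    · simp only [add_zero] at hab; subst hab; simpa using ⟨hp, hps⟩
    constructor
    · intro k
      have : 0 < a * p k + b * q k :=
        add_pos (mul_pos ha' (hp k)) (mul_pos hb' (hq k))
      simpa using this
    · have hcc := hconc.2 (hPS hp) (hPS hq) ha hb hab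
      have h1 : a * s + b * t < a * f p + b * f q := by
        have := mul_lt_mul_of_pos_left hps ha'
        have := mul_lt_mul_of_pos_left hqt hb'
        linarith
      calc (a • (p, s) + b • (q, t)).2 = a * s + b * t := rfl
        _ < a * f p + b * f q := h1
        _ ≤ f (a • p + b • q) := by simpa [smul_eq_mul] using hcc
        _ = f ((a • (p, s) + b • (q, t)).1) := rfl
  have hxU : (x, f x) ∉ U := fun h => lt_irrefl _ h.2
  obtain ⟨φ, hφ⟩ := geometric_hahn_banach_open_point hUconv hUopen hxU
  -- split φ into its two parts
  have hsplit : ∀ (y : Fin N → ℝ) (t : ℝ),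
      φ (y, t) = φ (y, 0) + t * φ (0, 1) := by
    intro y t
    have : ((y, t) : (Fin N → ℝ) × ℝ) = (y, 0) + t • ((0 : Fin N → ℝ), (1:ℝ)) := by
      simp [Prod.ext_iff]
    rw [this, map_add, φ.map_smul, smul_eq_mul]
  set β : ℝ := φ (0, 1) with hβdef
  have hβ : 0 < β := by
    have h1 : ((x, f x - 1) : (Fin N → ℝ) × ℝ) ∈ U := ⟨hx, by show f x - 1 < f x; linarith⟩
    have h2 := hφ _ h1
    rw [hsplit x (f x - 1), hsplit x (f x)] at h2
    nlinarith
  -- the interior inequality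
  have hint : ∀ v : Fin N → ℝ, (∀ k, 0 < v k) →
      φ (v, 0) + f v * β ≤ φ (x, 0) + f x * β := by
    intro v hv
    have hall : ∀ t, t < f v → t < (φ (x, 0) + f x * β - φ (v, 0)) / β := by
      intro t ht
      rw [lt_div_iff₀ hβ]
      have := hφ (v, t) ⟨hv, ht⟩
      rw [hsplit v t, hsplit x (f x)] at this
      nlinarith
    have hle : f v ≤ (φ (x, 0) + f x * β - φ (v, 0)) / β := le_of_forall_lt hall
    rw [le_div_iff₀ hβ] at hle
    linarith
  -- define the supergradient
  set Lm : (Fin N → ℝ) →ₗ[ℝ] ℝ :=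
    φ.toLinearMap.comp (LinearMap.inl ℝ (Fin N → ℝ) ℝ) with hLm
  have hLmapp : ∀ y : Fin N → ℝ, Lm y = φ (y, 0) := fun y => rfl
  set g : Fin N → ℝ := fun k => -(Lm fun j => if k = j then 1 else 0) / β with hg
  have hsumg : ∀ y : Fin N → ℝ, (∑ k, g k * (y k - x k)) * β = φ (x, 0) - φ (y, 0) := by
    intro y
    rw [Finset.sum_mul, ← hLmapp x, ← hLmapp y, LinearMap.pi_apply_eq_sum_univ Lm x,
      LinearMap.pi_apply_eq_sum_univ Lm y, ← Finset.sum_sub_distrib]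
    refine Finset.sum_congr rfl fun k _ => ?_
    simp only [hg, smul_eq_mul]
    field_simp
    ring
  refine ⟨g, fun y hy => ?_⟩
  -- midpoints argument extends the inequality to the whole orthant
  set m : Fin N → ℝ := (1/2 : ℝ) • x + (1/2 : ℝ) • y with hm
  have hmpos : ∀ k, 0 < m k := by
    intro k
    have : (0:ℝ) ≤ y k := hy k
    simp only [hm, Pi.add_apply, Pi.smul_apply, smul_eq_mul]
    nlinarith [hx k]
  have hmc : (1/2 : ℝ) * f x + (1/2 : ℝ) * f y ≤ f m := by
    have := hconc.2 hxS hy (by norm_num : (0:ℝ) ≤ 1/2) (by norm_num : (0:ℝ) ≤ 1/2)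
      (by norm_num : (1/2 : ℝ) + 1/2 = 1)
    simpa [hm, smul_eq_mul] using this
  have hintm := hint m hmpos
  have hφm : φ (m, 0) = (φ (x, 0) + φ (y, 0)) / 2 := by
    have : ((m, 0) : (Fin N → ℝ) × ℝ) =
        (1/2 : ℝ) • ((x, 0) : (Fin N → ℝ) × ℝ) + (1/2 : ℝ) • ((y, 0) : (Fin N → ℝ) × ℝ) := by
      refine Prod.ext ?_ (by norm_num)
      simp [hm]
    rw [this, map_add, φ.map_smul, φ.map_smul, smul_eq_mul, smul_eq_mul]
    ring
  have hSgy := hsumg y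
  have hfin : f y * β ≤ (f x + ∑ k, g k * (y k - x k)) * β := by
    have h2 : ((1/2 : ℝ) * f x + (1/2 : ℝ) * f y) * β ≤ f m * β :=
      mul_le_mul_of_nonneg_right hmc hβ.le
    nlinarith
  have := le_of_mul_le_mul_right hfin hβ
  linarith

section MatrixFacts

attribute [local instance] Matrix.linftyOpNormedRing Matrix.linftyOpNormedAlgebra

lemma entry_norm_le_linfty {N : ℕ} (A : Matrix (Fin N) (Fin N) ℂ) (i j : Fin N) :
    ‖A i j‖ ≤ ‖A‖ := by
  have h : ‖A i j‖₊ ≤ ‖A‖₊ := by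
    rw [Matrix.linfty_opNNNorm_def]
    exact le_trans (Finset.single_le_sum (f := fun k => ‖A i k‖₊) (fun k _ => zero_le)
      (Finset.mem_univ j)) (Finset.le_sup (f := fun r => ∑ k, ‖A r k‖₊) (Finset.mem_univ i))
  exact_mod_cast h

/-- If the spectral radius of a real matrix is less than one then its powers tend to zero
entrywise. -/
lemma pow_entries_tendsto_zero {N : ℕ} (M : Matrix (Fin N) (Fin N) ℝ)
    (hrad : specRad M < 1) (i j : Fin N) :
    Tendsto (fun n : ℕ => (M ^ n) i j) atTop (𝓝 0) := by
  set Mc : Matrix (Fin N) (Fin N) ℂ := M.map (algebraMap ℝ ℂ) with hMc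
  have hρtop : specRad M ≠ ⊤ := ne_top_of_lt (lt_of_lt_of_le hrad le_top)
  set r : ℝ := ((specRad M).toReal + 1) / 2 with hr
  have hρ1 : (specRad M).toReal < 1 := by
    have h1 := ENNReal.toReal_strict_mono (by simp : (1 : ENNReal) ≠ ⊤) hrad
    simpa using h1
  have hr0 : 0 < r := by
    have : 0 ≤ (specRad M).toReal := ENNReal.toReal_nonneg
    rw [hr]; linarith
  have hr1 : r < 1 := by rw [hr]; linarith
  have hρr : specRad M < ENNReal.ofReal r := by
    rw [ENNReal.lt_ofReal_iff_toReal_lt hρtop, hr]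
    linarith
  have hG := spectrum.pow_nnnorm_pow_one_div_tendsto_nhds_spectralRadius Mc
  have hev : ∀ᶠ n : ℕ in atTop, (‖Mc ^ n‖₊ : ENNReal) ^ (1 / (n:ℝ)) < ENNReal.ofReal r :=
    hG.eventually_lt_const hρr
  have hbound : ∀ᶠ n : ℕ in atTop, ‖(M ^ n) i j‖ ≤ r ^ n := by
    filter_upwards [hev, eventually_ge_atTop 1] with n hn hn1
    have hn0 : (n : ℝ) ≠ 0 := by positivity
    have h1 : (‖Mc ^ n‖₊ : ENNReal) < ENNReal.ofReal (r ^ n) := by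
      have h2 : ((‖Mc ^ n‖₊ : ENNReal) ^ (1 / (n:ℝ))) ^ (n : ℝ)
          < (ENNReal.ofReal r) ^ (n : ℝ) := ENNReal.rpow_lt_rpow hn (by positivity)
      rw [← ENNReal.rpow_mul, one_div, inv_mul_cancel₀ hn0, ENNReal.rpow_one,
        ENNReal.rpow_natCast, ← ENNReal.ofReal_pow hr0.le] at h2
      exact h2
    have h3 : ‖Mc ^ n‖ < r ^ n := by
      have h5 : ‖Mc ^ n‖₊ < Real.toNNReal (r ^ n) := by
        rw [ENNReal.ofReal] at h1
        exact_mod_cast h1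
      have h6 := Real.lt_toNNReal_iff_coe_lt.mp h5
      simpa using h6
    have hmap : Mc ^ n = (M ^ n).map (algebraMap ℝ ℂ) := by
      have : Mc = (algebraMap ℝ ℂ).mapMatrix M := rfl
      rw [this, ← map_pow]
      rfl
    have h4 : ‖(Mc ^ n) i j‖ = ‖(M ^ n) i j‖ := by
      rw [hmap, Matrix.map_apply]
      simp [Complex.norm_real]
    calc ‖(M ^ n) i j‖ = ‖(Mc ^ n) i j‖ := h4.symm
      _ ≤ ‖Mc ^ n‖ := entry_norm_le_linfty _ i j
      _ ≤ r ^ n := h3.le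
  exact squeeze_zero_norm' hbound (tendsto_pow_atTop_nhds_zero_of_lt_one hr0.le hr1)

/-- `1 - M` is invertible when the spectral radius of `M` is less than one. -/
lemma det_one_sub_isUnit {N : ℕ} (M : Matrix (Fin N) (Fin N) ℝ)
    (hrad : specRad M < 1) : IsUnit (1 - M).det := by
  rw [isUnit_iff_ne_zero]
  intro hdet
  set Mc : Matrix (Fin N) (Fin N) ℂ := M.map (algebraMap ℝ ℂ) with hMc
  have h1 : (1 - Mc).det = 0 := by
    have : (1 - Mc) = ((1 - M) : Matrix (Fin N) (Fin N) ℝ).map (algebraMap ℝ ℂ) := by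
      have : ((algebraMap ℝ ℂ).mapMatrix (1 - M) : Matrix (Fin N) (Fin N) ℂ)
          = 1 - (algebraMap ℝ ℂ).mapMatrix M := by rw [map_sub, _root_.map_one]
      simpa [RingHom.mapMatrix_apply, hMc] using this.symm
    rw [this, ← RingHom.mapMatrix_apply, ← RingHom.map_det, hdet, map_zero]
  have h2 : ¬ IsUnit (1 - Mc) := by
    intro h
    rw [Matrix.isUnit_iff_isUnit_det, h1] at h
    exact (isUnit_iff_ne_zero.mp h) rfl
  have h3 : (1 : ℂ) ∈ spectrum ℂ Mc := by
    rw [spectrum.mem_iff]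
    simpa using h2
  have h4 : (1 : ENNReal) ≤ spectralRadius ℂ Mc := by
    have := le_iSup₂ (f := fun k (_ : k ∈ spectrum ℂ Mc) => (‖k‖₊ : ENNReal)) 1 h3
    simpa [spectralRadius] using this
  rw [show spectralRadius ℂ Mc = specRad M from rfl] at h4
  exact absurd hrad (not_lt.mpr h4)

end MatrixFacts

/-- The inverse of `1 - M` dominates the identity entrywise. -/
lemma inv_one_sub_ge_one {N : ℕ} (M : Matrix (Fin N) (Fin N) ℝ)
    (hMnn : ∀ i j, 0 ≤ M i j) (hrad : specRad M < 1) (i j : Fin N) :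
    (1 : Matrix (Fin N) (Fin N) ℝ) i j ≤ (1 - M)⁻¹ i j := by
  classical
  set A := (1 - M)⁻¹ with hA
  have hdet := det_one_sub_isUnit M hrad
  have hinv : (1 - M) * A = 1 := Matrix.mul_nonsing_inv _ hdet
  have hMn : ∀ (n : ℕ) (a b : Fin N), 0 ≤ (M ^ n) a b := by
    intro n
    induction n with
    | zero =>
      intro a b
      rw [pow_zero]
      by_cases hab : a = b <;> simp [Matrix.one_apply, hab]
    | succ n ih =>
      intro a b
      rw [pow_succ, Matrix.mul_apply]
      exact Finset.sum_nonneg fun c _ => mul_nonneg (ih a c) (hMnn c b)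
  have hSid : ∀ k : ℕ, (∑ n ∈ Finset.range k, M ^ n) = A - M ^ k * A := by
    intro k
    have h1 : (∑ n ∈ Finset.range k, M ^ n) * (1 - M) = 1 - M ^ k := by
      have h := geom_sum_mul M k
      have : (∑ n ∈ Finset.range k, M ^ n) * (1 - M)
          = -((∑ n ∈ Finset.range k, M ^ n) * (M - 1)) := by
        noncomm_ring
      rw [this, h, neg_sub]
    calc (∑ n ∈ Finset.range k, M ^ n)
        = (∑ n ∈ Finset.range k, M ^ n) * ((1 - M) * A) := by rw [hinv, mul_one]
      _ = ((∑ n ∈ Finset.range k, M ^ n) * (1 - M)) * A := by rw [mul_assoc]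
      _ = (1 - M ^ k) * A := by rw [h1]
      _ = A - M ^ k * A := by rw [sub_mul, one_mul]
  have hten : Tendsto (fun k : ℕ => (∑ n ∈ Finset.range k, M ^ n) i j) atTop (𝓝 (A i j)) := by
    have heq : (fun k : ℕ => (∑ n ∈ Finset.range k, M ^ n) i j)
        = fun k : ℕ => A i j - (M ^ k * A) i j := by
      funext k; rw [hSid k]; simp [Matrix.sub_apply]
    rw [heq]
    have h0 : Tendsto (fun k : ℕ => (M ^ k * A) i j) atTop (𝓝 0) := by
      have : ∀ k : ℕ, (M ^ k * A) i j = ∑ l, (M ^ k) i l * A l j := by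
        intro k; rw [Matrix.mul_apply]
      simp_rw [this]
      have hts : Tendsto (fun k : ℕ => ∑ l, (M ^ k) i l * A l j) atTop
          (𝓝 (∑ _l : Fin N, (0:ℝ))) :=
        tendsto_finset_sum _ fun l _ => by
          simpa using (pow_entries_tendsto_zero M hrad i l).mul_const (A l j)
      simpa using hts
    simpa using tendsto_const_nhds.sub h0
  refine ge_of_tendsto hten ?_
  filter_upwards [eventually_ge_atTop 1] with k hk
  rw [Matrix.sum_apply]
  calc (1 : Matrix (Fin N) (Fin N) ℝ) i j = (M ^ 0) i j := by rw [pow_zero]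
    _ ≤ ∑ n ∈ Finset.range k, (M ^ n) i j :=
      Finset.single_le_sum (f := fun n => (M ^ n) i j) (fun n _ => hMn n i j)
        (Finset.mem_range.mpr hk)

/-- The key inequality: `f i 0 + (M x)_i ≤ f i x` on the orthant. -/
lemma key_ineq {N : ℕ} (f : Fin N → (Fin N → ℝ) → ℝ)
    (hconc : ∀ i, ConcaveOn ℝ {x : Fin N → ℝ | 0 ≤ x} (f i))
    (husc : ∀ i, UpperSemicontinuousOn (f i) {x : Fin N → ℝ | 0 ≤ x})
    (hpos : ∀ i, ∀ x : Fin N → ℝ, 0 ≤ x → 0 < f i x)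
    (M : Matrix (Fin N) (Fin N) ℝ) (hM : IsLBM f M) :
    ∀ x : Fin N → ℝ, 0 ≤ x → ∀ i, f i 0 + (M *ᵥ x) i ≤ f i x := by
  classical
  have hMle : ∀ i (x g : Fin N → ℝ), 0 ≤ x → IsSupergrad (f i) x g → ∀ k, M i k ≤ g k := by
    intro i x g hx hg k
    rw [hM i k]
    refine csInf_le ⟨0, ?_⟩ ⟨x, hx, g, hg, rfl⟩
    rintro t ⟨x', hx', g', hg', rfl⟩
    exact supergrad_nonneg (hpos i) hx' hg' k
  -- step 1: strictly positive points
  have hstep1 : ∀ x : Fin N → ℝ, (∀ k, 0 < x k) → ∀ i, f i 0 + (M *ᵥ x) i ≤ f i x := by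
    intro x hx i
    obtain ⟨g, hg⟩ := exists_supergrad (hconc i) hx
    have hxS : (0:Fin N → ℝ) ≤ x := fun k => (hx k).le
    have h0 := hg 0 le_rfl
    have hsum : ∑ k, g k * ((0:Fin N → ℝ) k - x k) = -(∑ k, g k * x k) := by
      rw [← Finset.sum_neg_distrib]
      refine Finset.sum_congr rfl fun k _ => by simp
    rw [hsum] at h0
    have hMx : (M *ᵥ x) i ≤ ∑ k, g k * x k := by
      rw [Matrix.mulVec, dotProduct]
      exact Finset.sum_le_sum fun k _ =>
        mul_le_mul_of_nonneg_right (hMle i x g hxS hg k) (hx k).le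
    linarith
  -- step 2: general points, by upper semicontinuity
  intro x hx i
  by_contra hlt
  push_neg at hlt
  set a : ℝ := f i 0 + (M *ᵥ x) i with ha
  set c : ℝ := (f i x + a) / 2 with hc
  have hxS : x ∈ {x : Fin N → ℝ | 0 ≤ x} := hx
  have hfc : f i x < c := by rw [hc]; linarith
  have hev := husc i x hxS c hfc
  have hev2 : {y : Fin N → ℝ | f i y < c} ∈ 𝓝[{x : Fin N → ℝ | 0 ≤ x}] x := hev
  rw [Metric.mem_nhdsWithin_iff] at hev2
  obtain ⟨δ, hδ, hb⟩ := hev2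
  set ε : ℝ := min (δ / 2) 1 with hε
  have hε0 : 0 < ε := lt_min (by linarith) one_pos
  set y : Fin N → ℝ := x + ε • 1 with hy
  have hypos : ∀ k, 0 < y k := by
    intro k
    have : (0:ℝ) ≤ x k := hx k
    simp only [hy, Pi.add_apply, Pi.smul_apply, Pi.one_apply, smul_eq_mul, mul_one]
    linarith
  have hyS : y ∈ {x : Fin N → ℝ | 0 ≤ x} := fun k => (hypos k).le
  have hdist : dist y x < δ := by
    rw [dist_eq_norm]
    have : y - x = ε • (1 : Fin N → ℝ) := by rw [hy]; abel
    rw [this, norm_smul]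
    have h1 : ‖(1 : Fin N → ℝ)‖ ≤ 1 := by
      apply pi_norm_le_iff_of_nonneg zero_le_one |>.mpr
      intro k; simp
    have h2 : |ε| = ε := abs_of_pos hε0
    have h3 : ε ≤ δ / 2 := min_le_left _ _
    have h5 : ‖ε‖ * ‖(1 : Fin N → ℝ)‖ ≤ ε := by
      rw [Real.norm_eq_abs, h2]
      nlinarith [norm_nonneg (1 : Fin N → ℝ)]
    linarith
  have hyb : f i y < c := hb ⟨Metric.mem_ball.mpr hdist, hyS⟩
  have hkey := hstep1 y hypos i
  have hMy : (M *ᵥ x) i ≤ (M *ᵥ y) i := by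
    rw [hy, Matrix.mulVec_add]
    have h1 : (M *ᵥ (ε • (1:Fin N → ℝ))) i = ε * (M *ᵥ (1:Fin N → ℝ)) i := by
      rw [Matrix.mulVec_smul]; rfl
    have h2 : 0 ≤ (M *ᵥ (1:Fin N → ℝ)) i := by
      rw [Matrix.mulVec, dotProduct]
      refine Finset.sum_nonneg fun k _ => ?_
      have hMk : 0 ≤ M i k := by
        rw [hM i k]
        refine Real.sInf_nonneg ?_
        rintro t ⟨x', hx', g', hg', rfl⟩
        exact supergrad_nonneg (hpos i) hx' hg' k
      simpa using hMk
    simp only [Pi.add_apply]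
    nlinarith
  have : a ≤ f i y := le_trans (by rw [ha]; linarith) hkey
  have : a < a := by
    calc a ≤ f i y := this
      _ < c := hyb
      _ < a := by rw [hc]; linarith
  exact lt_irrefl _ this

/-- The accelerated mapping takes strictly positive values on the nonnegative orthant;
in particular T(x) − Mx ≥ T(0) > 0 componentwise. -/
theorem accelerated_mapping_positive {N : ℕ} (f : Fin N → (Fin N → ℝ) → ℝ)
    (hconc : ∀ i, ConcaveOn ℝ {x : Fin N → ℝ | 0 ≤ x} (f i))
    (husc : ∀ i, UpperSemicontinuousOn (f i) {x : Fin N → ℝ | 0 ≤ x})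
    (hpos : ∀ i, ∀ x : Fin N → ℝ, 0 ≤ x → 0 < f i x)
    (M : Matrix (Fin N) (Fin N) ℝ) (hM : IsLBM f M)
    (hrad : specRad M < 1) :
    ∀ x : Fin N → ℝ, 0 ≤ x →
      (∀ i, 0 < ((1 - M)⁻¹ *ᵥ ((fun j => f j x) - M *ᵥ x)) i) ∧
      (∀ i, f i 0 ≤ f i x - (M *ᵥ x) i) ∧
      (∀ i, 0 < f i 0) := by
  intro x hx
  have hkey := key_ineq f hconc husc hpos M hM x hx
  have hMnn : ∀ i k, 0 ≤ M i k := by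
    intro i k
    rw [hM i k]
    refine Real.sInf_nonneg ?_
    rintro t ⟨x', hx', g', hg', rfl⟩
    exact supergrad_nonneg (hpos i) hx' hg' k
  have hA1 := inv_one_sub_ge_one M hMnn hrad
  set v : Fin N → ℝ := (fun j => f j x) - M *ᵥ x with hv
  have hvpos : ∀ j, 0 < v j := by
    intro j
    have := hkey j
    have h0 := hpos j 0 le_rfl
    simp only [hv, Pi.sub_apply]
    linarith
  refine ⟨?_, fun i => by have := hkey i; linarith, fun i => hpos i 0 le_rfl⟩
  intro i
  have hA0 : ∀ j, 0 ≤ (1 - M)⁻¹ i j := by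
    intro j
    refine le_trans ?_ (hA1 i j)
    by_cases hij : i = j <;> simp [Matrix.one_apply, hij]
  have hAii : 1 ≤ (1 - M)⁻¹ i i := by
    have := hA1 i i; simpa [Matrix.one_apply] using this
  have heq : ((1 - M)⁻¹ *ᵥ v) i = ∑ j, (1 - M)⁻¹ i j * v j := by
    rw [Matrix.mulVec, dotProduct]
  rw [heq]
  calc (0:ℝ) < v i := hvpos i
    _ ≤ (1 - M)⁻¹ i i * v i := by nlinarith [hvpos i]
    _ ≤ ∑ j, (1 - M)⁻¹ i j * v j :=
      Finset.single_le_sum (f := fun j => (1 - M)⁻¹ i j * v j)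
        (fun j _ => mul_nonneg (hA0 j) (hvpos j).le) (Finset.mem_univ i)
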